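/- Let X = {p} ∪ ω^{<ω₁} where every element of the tree ω^{<ω₁} (countable sequences of natural numbers of countable length) is isolated, and basic neighbourhoods of p are the sets {p} ∪ (ω^{<ω₁} \ F) where F is a union of finitely many branches of the tree. Then Alice has a winning strategy in the long tightness game G_1^{ω₁}(Ω_p, Ω_p): she plays the immediate successors of the concatenation of Bob's previous choices, forcing all of Bob's choices to lie along a single branch. -/

import Mathlib

open Topology Set

/-- The tree `ω^{<ω₁}`: sequences of natural numbers of countable ordinal length. -/
def TSeq : Type 1 :=
  Σ ξ : {o : Ordinal.{0} // o < (Cardinal.aleph 1).ord}, ∀ α : Ordinal.{0}, α < ξ.1 → ℕ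

/-- The extension (tree) order on `TSeq`: `s ⊑ t` iff `t` extends `s`. -/
def TSeq.le (s t : TSeq) : Prop :=
  ∃ h : s.1.1 ≤ t.1.1, ∀ α hα, s.2 α hα = t.2 α (lt_of_lt_of_le hα h)

/-- A branch of the tree `ω^{<ω₁}`: a maximal chain with respect to the extension order. -/
def IsBranch (c : Set TSeq) : Prop :=
  IsChain TSeq.le c ∧ ∀ c', IsChain TSeq.le c' → c ⊆ c' → c = c'

/-- The space `X = {p} ∪ ω^{<ω₁}` (`p = none`): tree elements are isolated, and a set
containing `p` is open iff its complement is covered by finitely many branches. -/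
instance : TopologicalSpace (Option TSeq) where
  IsOpen U := none ∈ U → ∃ F : Set (Set TSeq), F.Finite ∧ (∀ b ∈ F, IsBranch b) ∧
    {t : TSeq | some t ∉ U} ⊆ ⋃₀ F
  isOpen_univ := by
    intro _
    exact ⟨∅, Set.finite_empty, by simp, by simp⟩
  isOpen_inter := by
    intro U V hU hV h
    obtain ⟨F₁, hF₁, hb₁, hs₁⟩ := hU h.1
    obtain ⟨F₂, hF₂, hb₂, hs₂⟩ := hV h.2
    refine ⟨F₁ ∪ F₂, hF₁.union hF₂, ?_, ?_⟩
    · rintro b (hb | hb)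
      exacts [hb₁ b hb, hb₂ b hb]
    · intro t ht
      simp only [Set.mem_setOf_eq, Set.mem_inter_iff, not_and_or] at ht
      rcases ht with ht | ht
      · exact Set.sUnion_mono Set.subset_union_left (hs₁ ht)
      · exact Set.sUnion_mono Set.subset_union_right (hs₂ ht)
  isOpen_sUnion := by
    intro S hS h
    obtain ⟨s, hs, hns⟩ := h
    obtain ⟨F, hF, hb, hsub⟩ := hS s hs hns
    refine ⟨F, hF, hb, fun t ht => hsub fun hts => ht ⟨s, hs, hts⟩⟩

universe u v

/-- A strategy for Alice in the tightness game `G_1^κ(Ω_p, Ω_p)`: at inning `ξ < κ`, given the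
history of Bob's previous choices, Alice plays a set having `p` in its closure. -/
structure AliceStratOne (X : Type u) [TopologicalSpace X] (p : X) (κ : Ordinal.{v}) where
  move : ∀ ξ : Ordinal.{v}, ξ < κ → (∀ α : Ordinal.{v}, α < ξ → X) → Set X
  mem : ∀ ξ hξ hist, p ∈ closure (move ξ hξ hist)

/-- The strategy is winning for Alice: for every play `g` of Bob consistent with it (Bob
always picks a point of Alice's set), the set of Bob's points does not have `p` in its
closure. -/
def AliceStratOne.Winning {X : Type u} [TopologicalSpace X] {p : X} {κ : Ordinal.{v}}
    (S : AliceStratOne X p κ) : Prop :=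
  ∀ g : ∀ ξ : Ordinal.{v}, ξ < κ → X,
    (∀ ξ hξ, g ξ hξ ∈ S.move ξ hξ (fun α hα => g α (hα.trans hξ))) →
    p ∉ closure {x | ∃ (ξ : Ordinal.{v}) (hξ : ξ < κ), g ξ hξ = x}

namespace AliceTree

/-- `ω₁` is a limit ordinal. -/
theorem omega1_isLimit : Order.IsSuccLimit (Cardinal.aleph 1).ord :=
  Cardinal.isSuccLimit_ord (Cardinal.aleph0_le_aleph 1)

theorem lt_add_one' (a : Ordinal.{0}) : a < a + 1 := by
  rw [Ordinal.add_one_eq_succ]; exact Order.lt_succ a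

/-- Extract the `α`-th digit of Bob's move at inning `α` (default `0`). -/
noncomputable def digit (x : Option TSeq) (α : Ordinal.{0}) : ℕ :=
  match x with
  | none => 0
  | some s => if h : α < s.1.1 then s.2 α h else 0

/-- The node of length `ξ + 1` whose first `ξ` digits are given by `d` and last digit is `n`. -/
noncomputable def mkNode (ξ : Ordinal.{0}) (hξ : ξ < (Cardinal.aleph 1).ord)
    (d : ∀ α : Ordinal.{0}, α < ξ → ℕ) (n : ℕ) : TSeq :=
  ⟨⟨ξ + 1, by rw [Ordinal.add_one_eq_succ]; exact omega1_isLimit.succ_lt hξ⟩,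
   fun α _ => if h : α < ξ then d α h else n⟩

theorem TSeq.le_refl (t : TSeq) : TSeq.le t t := ⟨le_rfl, fun _ _ => rfl⟩

theorem mkNode_le_inj {ξ hξ d n m} (h : TSeq.le (mkNode ξ hξ d n) (mkNode ξ hξ d m)) :
    n = m := by
  obtain ⟨h1, hv⟩ := h
  have h2 := hv ξ (lt_add_one' ξ)
  simpa [mkNode] using h2

/-- Alice's move: the immediate successors of the concatenation of Bob's previous choices. -/
def aliceMove (ξ : Ordinal.{0}) (hξ : ξ < (Cardinal.aleph 1).ord)
    (hist : ∀ α : Ordinal.{0}, α < ξ → Option TSeq) : Set (Option TSeq) :=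
  Set.range (fun n => some (mkNode ξ hξ (fun α hα => digit (hist α hα) α) n))

theorem aliceMove_mem (ξ : Ordinal.{0}) (hξ : ξ < (Cardinal.aleph 1).ord)
    (hist : ∀ α : Ordinal.{0}, α < ξ → Option TSeq) :
    (none : Option TSeq) ∈ closure (aliceMove ξ hξ hist) := by
  rw [mem_closure_iff]
  intro o ho hno
  by_contra hemp
  obtain ⟨F, hF, hbr, hcov⟩ := ho hno
  set d := fun α hα => digit (hist α hα) α with hd
  have hmem : ∀ n : ℕ, mkNode ξ hξ d n ∈ ⋃₀ F := by
    intro n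
    apply hcov
    intro hin
    exact hemp ⟨some (mkNode ξ hξ d n), hin, ⟨n, rfl⟩⟩
  choose b hbF hbmem using fun n => (hmem n)
  obtain ⟨i, -, j, -, hij, hbij⟩ :=
    Set.Infinite.exists_ne_map_eq_of_mapsTo (Set.infinite_univ (α := ℕ))
      (fun n _ => hbF n) hF
  have hchain : IsChain TSeq.le (b i) := (hbr _ (hbF i)).1
  apply hij
  by_cases heq : mkNode ξ hξ d i = mkNode ξ hξ d j
  · have hle : TSeq.le (mkNode ξ hξ d i) (mkNode ξ hξ d j) := by
      rw [heq]; exact TSeq.le_refl _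
    exact mkNode_le_inj hle
  · rcases hchain (hbmem i) (hbij ▸ hbmem j) heq with h | h
    · exact mkNode_le_inj h
    · exact (mkNode_le_inj h).symm

end AliceTree

/-- On `X = {p} ∪ ω^{<ω₁}` with the branch topology, Alice has a winning strategy in the
long tightness game `G_1^{ω₁}(Ω_p, Ω_p)`. -/
theorem alice_winning_tree :
    ∃ S : AliceStratOne.{1, 0} (Option TSeq) none (Cardinal.aleph 1).ord, S.Winning := by
  classical
  refine ⟨⟨fun ξ hξ hist => AliceTree.aliceMove ξ hξ hist,
    fun ξ hξ hist => AliceTree.aliceMove_mem ξ hξ hist⟩, ?_⟩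
  intro g hg
  choose n hn using hg
  set node : ∀ ξ : Ordinal.{0}, ξ < (Cardinal.aleph 1).ord → TSeq := fun ξ hξ =>
    AliceTree.mkNode ξ hξ
      (fun α hα => AliceTree.digit (g α (hα.trans hξ)) α) (n ξ hξ) with hnode
  have hgn : ∀ ξ hξ, g ξ hξ = some (node ξ hξ) := fun ξ hξ => (hn ξ hξ).symm
  -- the chain lemma
  have hle : ∀ ξ hξ ξ' hξ', ξ < ξ' → TSeq.le (node ξ hξ) (node ξ' hξ') := by
    intro ξ hξ ξ' hξ' hξξ'
    have hlen : ξ + 1 ≤ ξ' + 1 := add_le_add_left hξξ'.le 1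
    refine ⟨hlen, ?_⟩
    intro α hα
    have hα1 : α < ξ + 1 := hα
    have hαξ : α ≤ ξ := by
      rw [Ordinal.add_one_eq_succ] at hα1
      exact Order.lt_succ_iff.mp hα1
    rcases lt_or_eq_of_le hαξ with hlt | heq
    · show (if h : α < ξ then AliceTree.digit (g α (h.trans hξ)) α else n ξ hξ)
        = (if h : α < ξ' then AliceTree.digit (g α (h.trans hξ')) α else n ξ' hξ')
      rw [dif_pos hlt, dif_pos (hlt.trans hξξ')]
    · subst heq
      show (if h : α < α then AliceTree.digit (g α (h.trans hξ)) α else n α hξ)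
        = (if h : α < ξ' then AliceTree.digit (g α (h.trans hξ')) α else n ξ' hξ')
      rw [dif_neg (lt_irrefl α), dif_pos hξξ']
      show n α hξ = AliceTree.digit (g α (hξξ'.trans hξ')) α
      rw [hgn α (hξξ'.trans hξ')]
      show n α hξ = if h : α < α + 1 then (node α hξ).2 α h else 0
      rw [dif_pos (AliceTree.lt_add_one' α)]
      show n α hξ = if h : α < α
        then AliceTree.digit (g α (h.trans hξ)) α else n α hξ
      rw [dif_neg (lt_irrefl α)]
  -- Bob's points form a chain
  set T : Set TSeq := {t | ∃ ξ hξ, g ξ hξ = some t} with hT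
  have hchain : IsChain TSeq.le T := by
    rintro t ⟨ξ, hξ, ht⟩ t' ⟨ξ', hξ', ht'⟩ hne
    have ht2 : t = node ξ hξ := by
      have := (hgn ξ hξ).symm.trans ht
      exact (Option.some_injective _ this).symm
    have ht2' : t' = node ξ' hξ' := by
      have := (hgn ξ' hξ').symm.trans ht'
      exact (Option.some_injective _ this).symm
    subst ht2 ht2'
    rcases lt_trichotomy ξ ξ' with h | h | h
    · exact Or.inl (hle ξ hξ ξ' hξ' h)
    · subst h; exact absurd rfl hne
    · exact Or.inr (hle ξ' hξ' ξ hξ h)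
  obtain ⟨c, hcmax, hTc⟩ := hchain.exists_maxChain
  have hbranch : IsBranch c := ⟨hcmax.1, fun c' h1 h2 => hcmax.2 h1 h2⟩
  -- the open set avoiding the branch c
  intro hcl
  rw [mem_closure_iff] at hcl
  set U : Set (Option TSeq) := {x | ∀ t, x = some t → t ∉ c} with hU
  have hUopen : IsOpen U := by
    intro _
    refine ⟨{c}, Set.finite_singleton c, by simpa using hbranch, ?_⟩
    intro t ht
    simp only [hU, Set.mem_setOf_eq, not_forall] at ht
    obtain ⟨t', h1, h2⟩ := ht
    rw [Set.sUnion_singleton, Option.some_injective _ h1]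
    exact not_not.mp h2
  have hnU : (none : Option TSeq) ∈ U := by
    intro t ht
    exact absurd ht (by simp)
  obtain ⟨x, hxU, ξ, hξ, hgx⟩ := hcl U hUopen hnU
  have hx : x = some (node ξ hξ) := hgx ▸ hgn ξ hξ
  exact hxU (node ξ hξ) hx (hTc ⟨ξ, hξ, hgn ξ hξ⟩)
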